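/- Let (C,J) be a small site with C having finite limits, let ℓ : (Cᵒᵖ ⥤ Type) ⥤ Sheaf J (Type) be sheafification, and ŷ := ℓ ∘ y the sheafified Yoneda embedding. Let E and F be Grothendieck topoi and f^* ⊣ f_* an adjunction with f^* : F ⥤ E preserving finite limits. Assume that for every functor x^* : Sheaf J (Type) ⥤ E preserving finite limits and small colimits, the pointwise left Kan extension along Yoneda of the composite f_* ∘ x^* ∘ ŷ : C ⥤ F sends the inclusion S ↪ y(c) of every J-covering sieve to an isomorphism. Then for every such x^* there exist a functor R(x^*) : Sheaf J (Type) ⥤ F preserving finite limits and small colimits and a bijection, natural in functors g^* : Sheaf J (Type) ⥤ F preserving finite limits and small colimits, between natural transformations f^* ∘ g^* ⟶ x^* and natural transformations g^* ⟶ R(x^*). (General criterion: under this continuity hypothesis the topos Sh(C,J) is weakly right Kan injective with respect to f, with presentation by the presheaf topos on C.) -/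

import Mathlib

universe u

open CategoryTheory Limits

/-- A functor is (the inverse image of) a generalised point if it preserves finite limits
and small colimits. -/
def IsPoint {X : Type*} [Category X] {E : Type*} [Category E] (G : X ⥤ E) : Prop :=
  Nonempty (PreservesFiniteLimits G) ∧ Nonempty (PreservesColimitsOfSize.{u, u} G)

universe v

namespace Statement18Aux

open Opposite

variable {C : Type u} [SmallCategory C]

section TypeValued

variable (B : C ⥤ Type u)

/-- Explicit cocontinuous extension of `B : C ⥤ Type u` to presheaves:
the colimit over the (opposite of the) category of elements of `B`. -/
noncomputable def phi : (Cᵒᵖ ⥤ Type u) ⥤ Type u :=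
  (Functor.whiskeringLeft _ _ _).obj (CategoryOfElements.π B).op ⋙ colim

/-- The cocone exhibiting `B.obj c` as the value of `phi B` at `yoneda.obj c`. -/
@[simps]
def phiCocone (c : C) : Cocone ((CategoryOfElements.π B).op ⋙ yoneda.obj c) where
  pt := B.obj c
  ι :=
    { app := fun e => TypeCat.ofHom (fun f => B.map f e.unop.2)
      naturality := fun e e' g => by
        ext f
        exact (FunctorToTypes.map_comp_apply B g.unop.1 f e'.unop.2).trans
          (congrArg (B.map f) g.unop.2) }
/-- The cocone `phiCocone B c` is a colimit cocone. -/
noncomputable def phiCoconeIsColimit (c : C) : IsColimit (phiCocone B c) where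
  desc s := TypeCat.ofHom (fun (b : B.obj c) => s.ι.app (op ⟨c, b⟩) (𝟙 c))
  fac s e := by
    ext f
    have := ConcreteCategory.congr_hom
      (s.w (Quiver.Hom.op (CategoryOfElements.homMk e.unop ⟨c, B.map f e.unop.2⟩ f rfl))) (𝟙 c)
    change s.ι.app (op ⟨c, B.map f e.unop.2⟩) (𝟙 c) = s.ι.app e f
    rw [← this]
    exact congrArg (s.ι.app e) (Category.comp_id f)
  uniq s m hm := by
    ext b
    have h := ConcreteCategory.congr_hom (hm (op ⟨c, b⟩)) (𝟙 c)
    change m b = s.ι.app (op ⟨c, b⟩) (𝟙 c)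
    rw [← h]
    exact congrArg (fun x => m x) (show b = B.map (𝟙 c) b by rw [B.map_id]; rfl)
/-- `phi B` extends `B` along the Yoneda embedding. -/
noncomputable def phiExtIso : yoneda ⋙ phi B ≅ B :=
  NatIso.ofComponents
    (fun c => (colimit.isColimit _).coconePointUniqueUpToIso (phiCoconeIsColimit B c))
    (fun {c c'} f => by
      apply colimit.hom_ext
      intro e
      have h₁ := IsColimit.comp_coconePointUniqueUpToIso_hom (colimit.isColimit _)
        (phiCoconeIsColimit B c') e
      have h₂ := IsColimit.comp_coconePointUniqueUpToIso_hom (colimit.isColimit _)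
        (phiCoconeIsColimit B c) e
      dsimp [phi] at h₁ h₂ ⊢
      erw [ι_colimMap_assoc, h₁]
      erw [reassoc_of% h₂]
      ext g
      dsimp
      simp [FunctorToTypes.map_comp_apply]
      rfl)

noncomputable instance : PreservesColimitsOfSize.{u, u} (phi B) := by
  dsimp [phi]
  infer_instance

/-- If `B` preserves finite limits then so does its extension `phi B`. -/
noncomputable def phiPreservesFiniteLimits [HasFiniteLimits C] [PreservesFiniteLimits B] :
    PreservesFiniteLimits (phi B) := by
  have : RepresentablyFlat B := flat_of_preservesFiniteLimits B
  have : IsCofiltered B.Elements :=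
    IsCofiltered.of_equivalence (CategoryOfElements.structuredArrowEquivalence B).symm
  have h₁ : PreservesFiniteLimits ((Functor.whiskeringLeft _ _ (Type u)).obj
      (CategoryOfElements.π B).op) :=
    PreservesLimitsOfSize.preservesFiniteLimits.{0, 0} _
  exact comp_preservesFiniteLimits _ _

end TypeValued

section YonedaExt

variable {ℰ : Type v} [Category.{u} ℰ]

lemma lkeTransfer {D H : Type*} [Category D] [Category H] {L L' : C ⥤ D} (iso₁ : L ≅ L')
    {F : C ⥤ H} (G : D ⥤ H) (α : F ⟶ L ⋙ G) [G.IsLeftKanExtension α] :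
    G.IsLeftKanExtension (α ≫ Functor.whiskerRight iso₁.hom G) :=
  ⟨⟨(IsInitial.isInitialIffObj (Functor.leftExtensionEquivalenceOfIso₁ iso₁ F).functor _).1
    (G.isUniversalOfIsLeftKanExtension α)⟩⟩

lemma lkeOfPres [HasColimitsOfSize.{u, u} ℰ] {A : C ⥤ ℰ} (L : (Cᵒᵖ ⥤ Type u) ⥤ ℰ)
    (e : A ≅ yoneda ⋙ L) [PreservesColimitsOfSize.{u, u} L] : L.IsLeftKanExtension e.hom := by
  have := Presheaf.isLeftKanExtension_of_preservesColimits.{0} L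
    (e ≪≫ Functor.isoWhiskerRight uliftYonedaIsoYoneda.{u}.symm L)
  have := lkeTransfer uliftYonedaIsoYoneda.{u} L
    (e ≪≫ Functor.isoWhiskerRight uliftYonedaIsoYoneda.{u}.symm L).hom
  have h : (e ≪≫ Functor.isoWhiskerRight uliftYonedaIsoYoneda.{u}.symm L).hom ≫
      Functor.whiskerRight uliftYonedaIsoYoneda.{u}.hom L = e.hom := by
    ext X
    simp only [Iso.trans_hom, NatTrans.comp_app, Functor.isoWhiskerRight_hom,
      Functor.whiskerRight_app, Iso.symm_hom, Category.assoc, ← Functor.map_comp,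
      Iso.inv_hom_id_app, CategoryTheory.Functor.map_id, Category.comp_id]
    exact Category.comp_id _
  rw [h] at this
  exact this

noncomputable def uniqueExtAlongYoneda [HasColimitsOfSize.{u, u} ℰ] {A : C ⥤ ℰ}
    (L : (Cᵒᵖ ⥤ Type u) ⥤ ℰ) (e : A ≅ yoneda ⋙ L) [PreservesColimitsOfSize.{u, u} L] :
    L ≅ yoneda.leftKanExtension A :=
  have := lkeOfPres L e
  Functor.leftKanExtensionUnique L e.hom _ (yoneda.leftKanExtensionUnit A)

instance isIsoUnitY [HasColimitsOfSize.{u, u} ℰ] (A : C ⥤ ℰ) :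
    IsIso (yoneda.leftKanExtensionUnit A) :=
  (Functor.isPointwiseLeftKanExtensionLeftKanExtensionUnit yoneda A).isIso_hom

noncomputable def isExtAlongYoneda [HasColimitsOfSize.{u, u} ℰ] (A : C ⥤ ℰ) :
    yoneda ⋙ yoneda.leftKanExtension A ≅ A :=
  (asIso (yoneda.leftKanExtensionUnit A)).symm

noncomputable def yonedaAdj [HasColimitsOfSize.{u, u} ℰ] {A : C ⥤ ℰ}
    (R : (Cᵒᵖ ⥤ Type u) ⥤ ℰ) (α : A ⟶ yoneda ⋙ R) [R.IsLeftKanExtension α] :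
    R ⊣ Presheaf.restrictedULiftYoneda.{u} A :=
  have := lkeTransfer uliftYonedaIsoYoneda.{u}.symm R α
  Presheaf.uliftYonedaAdjunction.{0} R (α ≫ Functor.whiskerRight uliftYonedaIsoYoneda.{u}.symm.hom R)

noncomputable instance presColimY [HasColimitsOfSize.{u, u} ℰ] (A : C ⥤ ℰ) :
    PreservesColimitsOfSize.{u, u} (yoneda.leftKanExtension A) :=
  (yonedaAdj _ (yoneda.leftKanExtensionUnit A)).leftAdjoint_preservesColimits

end YonedaExt

section SheafValued

variable {D : Type u} [SmallCategory D] (K : GrothendieckTopology D)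

/-- Left Kan extension along Yoneda into a presheaf category of a functor preserving
finite limits preserves finite limits. -/
noncomputable def lkePresheafPreservesFiniteLimits [HasFiniteLimits C]
    (A : C ⥤ (Dᵒᵖ ⥤ Type u)) [PreservesFiniteLimits A] :
    PreservesFiniteLimits (yoneda.leftKanExtension A) := by
  constructor
  intro J _ _
  apply preservesLimitsOfShape_of_evaluation
  intro d
  haveI : PreservesFiniteLimits ((evaluation Dᵒᵖ (Type u)).obj d) :=
    PreservesLimitsOfSize.preservesFiniteLimits.{0, 0} _
  haveI : PreservesFiniteLimits (A ⋙ (evaluation Dᵒᵖ (Type u)).obj d) :=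
    comp_preservesFiniteLimits _ _
  haveI := phiPreservesFiniteLimits (A ⋙ (evaluation Dᵒᵖ (Type u)).obj d)
  haveI : PreservesColimitsOfSize.{u, u}
      (yoneda.leftKanExtension A ⋙ (evaluation Dᵒᵖ (Type u)).obj d) := by
    infer_instance
  have e : A ⋙ (evaluation Dᵒᵖ (Type u)).obj d ≅
      yoneda ⋙ (yoneda.leftKanExtension A ⋙ (evaluation Dᵒᵖ (Type u)).obj d) :=
    Functor.isoWhiskerRight (isExtAlongYoneda A).symm _ ≪≫ Functor.associator _ _ _
  have i : yoneda.leftKanExtension A ⋙ (evaluation Dᵒᵖ (Type u)).obj d ≅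
      phi (A ⋙ (evaluation Dᵒᵖ (Type u)).obj d) :=
    uniqueExtAlongYoneda _ e ≪≫
      (uniqueExtAlongYoneda (phi (A ⋙ (evaluation Dᵒᵖ (Type u)).obj d)) (phiExtIso _).symm).symm
  exact preservesLimitsOfShape_of_natIso i.symm

/-- Left Kan extension along Yoneda into a sheaf topos of a functor preserving
finite limits preserves finite limits. -/
noncomputable def lkeSheafPreservesFiniteLimits [HasFiniteLimits C]
    (A' : C ⥤ Sheaf K (Type u)) [PreservesFiniteLimits A'] :
    PreservesFiniteLimits (yoneda.leftKanExtension A') := by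
  haveI : HasColimitsOfSize.{u, u} (Sheaf K (Type u)) := Sheaf.instHasColimitsOfSize
  letI A : C ⥤ (Dᵒᵖ ⥤ Type u) := A' ⋙ sheafToPresheaf K (Type u)
  haveI : PreservesFiniteLimits (sheafToPresheaf K (Type u)) :=
    PreservesLimitsOfSize.preservesFiniteLimits.{0, 0} _
  haveI : PreservesFiniteLimits A := comp_preservesFiniteLimits _ _
  have e : A' ≅ yoneda ⋙ (yoneda.leftKanExtension A ⋙ presheafToSheaf K (Type u)) :=
    Functor.isoWhiskerLeft A' (asIso ((sheafificationAdjunction K (Type u)).counit)).symm ≪≫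
      (Functor.associator _ _ _).symm ≪≫
      Functor.isoWhiskerRight (isExtAlongYoneda A).symm (presheafToSheaf K (Type u)) ≪≫
      Functor.associator _ _ _
  haveI := lkePresheafPreservesFiniteLimits A
  haveI : PreservesFiniteLimits (yoneda.leftKanExtension A ⋙ presheafToSheaf K (Type u)) :=
    comp_preservesFiniteLimits _ _
  exact preservesFiniteLimits_of_natIso (uniqueExtAlongYoneda _ e)

end SheafValued


section Restriction

variable (J : GrothendieckTopology C)
variable {E : Type v} [Category.{u} E] [HasColimitsOfSize.{u, u} E]

/-- For a small-colimit-preserving functor `g` out of a sheaf topos, restriction of natural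
transformations along the sheafified Yoneda embedding is bijective. -/
lemma restriction_bijective (g H : Sheaf J (Type u) ⥤ E)
    [inst : PreservesColimitsOfSize.{u, u} g] :
    Function.Bijective (fun (σ : g ⟶ H) =>
      Functor.whiskerLeft (yoneda ⋙ presheafToSheaf J (Type u)) σ) := by
  letI L := presheafToSheaf J (Type u)
  haveI := Localization.full_whiskeringLeft L (GrothendieckTopology.W (A := Type u) J) E
  haveI := Localization.faithful_whiskeringLeft L (GrothendieckTopology.W (A := Type u) J) E
  have h1 : Function.Bijective (fun (σ : g ⟶ H) => (Functor.whiskerLeft L σ : L ⋙ g ⟶ L ⋙ H)) := by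
    constructor
    · intro a b hab
      exact ((Functor.whiskeringLeft _ _ E).obj L).map_injective hab
    · intro τ
      exact ⟨((Functor.whiskeringLeft _ _ E).obj L).preimage τ,
        ((Functor.whiskeringLeft _ _ E).obj L).map_preimage τ⟩
  haveI : PreservesColimitsOfSize.{u, u} L :=
    (sheafificationAdjunction J (Type u)).leftAdjoint_preservesColimits
  haveI : PreservesColimitsOfSize.{u, u} (L ⋙ g) := inferInstance
  haveI : (L ⋙ g).IsLeftKanExtension (𝟙 (yoneda ⋙ (L ⋙ g))) := lkeOfPres (L ⋙ g) (Iso.refl _)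
  have h2 : Function.Bijective (fun (τ : L ⋙ g ⟶ L ⋙ H) =>
      (Functor.whiskerLeft yoneda τ : yoneda ⋙ (L ⋙ g) ⟶ yoneda ⋙ (L ⋙ H))) := by
    have : (fun (τ : L ⋙ g ⟶ L ⋙ H) =>
        (Functor.whiskerLeft yoneda τ : yoneda ⋙ (L ⋙ g) ⟶ yoneda ⋙ (L ⋙ H))) =
        ((L ⋙ g).homEquivOfIsLeftKanExtension (𝟙 (yoneda ⋙ (L ⋙ g))) (L ⋙ H)) := by
      funext τ
      show _ = 𝟙 _ ≫ _
      rw [Category.id_comp]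
    rw [this]
    exact Equiv.bijective _
  exact h2.comp h1

end Restriction

end Statement18Aux

open Statement18Aux

/-- General criterion for weak right Kan injectivity of a sheaf topos `Sh(C, J)` with
respect to a geometric morphism `f^* ⊣ f_*`: if for every point `x^*` of `Sh(C, J)` the
pointwise left Kan extension along Yoneda of `f_* ∘ x^* ∘ ŷ` sends the inclusion of every
`J`-covering sieve into its representable to an isomorphism, then for every point `x^*`
there is a point `R(x^*)` of `Sh(C, J)` in `F` together with a bijection, natural in
points `g^*`, between natural transformations `f^* ∘ g^* ⟶ x^*` and `g^* ⟶ R(x^*)`. -/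
theorem statement18 {C : Type u} [SmallCategory C] [HasFiniteLimits C]
    (J : GrothendieckTopology C)
    {D₁ D₂ : Type u} [SmallCategory D₁] [SmallCategory D₂]
    (J₁ : GrothendieckTopology D₁) (K₂ : GrothendieckTopology D₂)
    (fstar : Sheaf K₂ (Type u) ⥤ Sheaf J₁ (Type u))
    (fsub : Sheaf J₁ (Type u) ⥤ Sheaf K₂ (Type u))
    (adj : fstar ⊣ fsub) [PreservesFiniteLimits fstar]
    (hcont : ∀ (xstar : Sheaf J (Type u) ⥤ Sheaf J₁ (Type u)), IsPoint.{u} xstar →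
      ∀ (R₀ : (Cᵒᵖ ⥤ Type u) ⥤ Sheaf K₂ (Type u))
        (α : (yoneda ⋙ presheafToSheaf J (Type u)) ⋙ xstar ⋙ fsub ⟶ yoneda ⋙ R₀),
        (Functor.LeftExtension.mk R₀ α).IsPointwiseLeftKanExtension →
        ∀ (c : C) (S : Sieve c), S ∈ J c → IsIso (R₀.map S.functorInclusion)) :
    ∀ (xstar : Sheaf J (Type u) ⥤ Sheaf J₁ (Type u)), IsPoint.{u} xstar →
      ∃ R : Sheaf J (Type u) ⥤ Sheaf K₂ (Type u), IsPoint.{u} R ∧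
        ∃ e : ∀ g : Sheaf J (Type u) ⥤ Sheaf K₂ (Type u),
            IsPoint.{u} g → (((g ⋙ fstar) ⟶ xstar) ≃ (g ⟶ R)),
          ∀ (g g' : Sheaf J (Type u) ⥤ Sheaf K₂ (Type u))
            (hg : IsPoint.{u} g) (hg' : IsPoint.{u} g')
            (φ : g' ⟶ g) (β : (g ⋙ fstar) ⟶ xstar),
            e g' hg' (Functor.whiskerRight φ fstar ≫ β) = φ ≫ e g hg β := by
  intro xstar hx
  haveI : HasColimitsOfSize.{u, u} (Sheaf K₂ (Type u)) := Sheaf.instHasColimitsOfSize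
  haveI := hx.1.some
  haveI := hx.2.some
  haveI : PreservesLimitsOfSize.{0, 0} fsub := adj.rightAdjoint_preservesLimits
  haveI : PreservesFiniteLimits fsub :=
    PreservesLimitsOfSize.preservesFiniteLimits.{0, 0} fsub
  let L := presheafToSheaf J (Type u)
  let F₁ : C ⥤ Sheaf K₂ (Type u) := (yoneda ⋙ L) ⋙ xstar ⋙ fsub
  haveI : PreservesFiniteLimits (yoneda : C ⥤ _) :=
    PreservesLimitsOfSize.preservesFiniteLimits.{0, 0} _
  haveI : PreservesFiniteLimits (yoneda ⋙ L) := comp_preservesFiniteLimits _ _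
  haveI : PreservesFiniteLimits (xstar ⋙ fsub) := comp_preservesFiniteLimits _ _
  haveI : PreservesFiniteLimits F₁ := comp_preservesFiniteLimits _ _
  let R₀ := yoneda.leftKanExtension F₁
  let α : F₁ ⟶ yoneda ⋙ R₀ := yoneda.leftKanExtensionUnit F₁
  haveI hLKE : R₀.IsLeftKanExtension α :=
    inferInstanceAs ((yoneda.leftKanExtension F₁).IsLeftKanExtension
      (yoneda.leftKanExtensionUnit F₁))
  have hsieve : ∀ (c : C) (S : Sieve c), S ∈ J c → IsIso (R₀.map S.functorInclusion) :=
    hcont xstar hx R₀ α (Functor.isPointwiseLeftKanExtensionLeftKanExtensionUnit yoneda F₁)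
  let G := Presheaf.restrictedULiftYoneda.{u} F₁
  let adjR : R₀ ⊣ G := yonedaAdj R₀ α
  -- the right adjoint takes values in `J`-sheaves
  have hGsheaf : ∀ X : Sheaf K₂ (Type u), Presheaf.IsSheaf J (G.obj X) := by
    intro X
    rw [isSheaf_iff_isSheaf_of_type]
    intro c S hS
    rw [Presieve.isSheafFor_iff_yonedaSheafCondition]
    intro f
    haveI := hsieve c S hS
    refine ⟨(adjR.homEquiv _ X)
      (inv (R₀.map S.functorInclusion) ≫ (adjR.homEquiv _ X).symm f), ?_, ?_⟩
    · show S.functorInclusion ≫ _ = f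
      rw [← Adjunction.homEquiv_naturality_left, IsIso.hom_inv_id_assoc,
        Equiv.apply_symm_apply]
    · intro g' hg'
      have hg'' : S.functorInclusion ≫ g' = f := hg'
      apply (adjR.homEquiv _ X).symm.injective
      rw [Equiv.symm_apply_apply, ← hg'', Adjunction.homEquiv_naturality_left_symm,
        IsIso.inv_hom_id_assoc]
  -- `R₀` inverts all `J`-local isomorphisms
  have hW : ∀ {P Q : Cᵒᵖ ⥤ Type u} (w : P ⟶ Q),
      GrothendieckTopology.W (A := Type u) J w → IsIso (R₀.map w) := by
    intro P Q w hw
    have key : ∀ (X : Sheaf K₂ (Type u)),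
        Function.Bijective (fun (h : R₀.obj Q ⟶ X) => R₀.map w ≫ h) := by
      intro X
      have hb := hw (G.obj X) (hGsheaf X)
      have hfun : (fun (h : R₀.obj Q ⟶ X) => R₀.map w ≫ h) =
          (adjR.homEquiv P X).symm ∘ (fun (t : Q ⟶ G.obj X) => w ≫ t) ∘
            (adjR.homEquiv Q X) := by
        funext h
        dsimp
        rw [← Adjunction.homEquiv_naturality_left, Equiv.symm_apply_apply]
      rw [hfun]
      exact ((adjR.homEquiv P X).symm.bijective.comp hb).comp
        (adjR.homEquiv Q X).bijective
    obtain ⟨h, hh⟩ := (key (R₀.obj P)).2 (𝟙 _)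
    refine ⟨⟨h, hh, ?_⟩⟩
    apply (key (R₀.obj Q)).1
    dsimp at hh ⊢
    rw [reassoc_of% hh]
    simp
  -- the right Kan lift of `xstar` and its right adjoint
  let R : Sheaf J (Type u) ⥤ Sheaf K₂ (Type u) := sheafToPresheaf J (Type u) ⋙ R₀
  let G' : Sheaf K₂ (Type u) ⥤ Sheaf J (Type u) :=
    { obj := fun X => ⟨G.obj X, hGsheaf X⟩
      map := fun f => ⟨G.map f⟩
      map_id := fun X => Sheaf.hom_ext (G.map_id X)
      map_comp := fun f g => Sheaf.hom_ext (G.map_comp f g) }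
  have adj' : R ⊣ G' := Adjunction.mkOfHomEquiv
    { homEquiv := fun Y X =>
        (adjR.homEquiv ((sheafToPresheaf J (Type u)).obj Y) X).trans
          ⟨fun t => ⟨t⟩, fun s => s.hom, fun t => rfl, fun s => rfl⟩
      homEquiv_naturality_left_symm := fun {Y' Y X} f g =>
        adjR.homEquiv_naturality_left_symm f.hom g.hom
      homEquiv_naturality_right := fun {Y X X'} f g => by
        apply Sheaf.hom_ext
        exact adjR.homEquiv_naturality_right f g }
  haveI : PreservesColimitsOfSize.{u, u} R := adj'.leftAdjoint_preservesColimits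
  haveI : PreservesFiniteLimits R₀ := lkeSheafPreservesFiniteLimits K₂ F₁
  haveI : PreservesFiniteLimits (sheafToPresheaf J (Type u)) :=
    PreservesLimitsOfSize.preservesFiniteLimits.{0, 0} _
  haveI : PreservesFiniteLimits R := comp_preservesFiniteLimits _ _
  -- the comparison isomorphism on representables
  let t : R₀ ⟶ (L ⋙ sheafToPresheaf J (Type u)) ⋙ R₀ :=
    Functor.whiskerRight (sheafificationAdjunction J (Type u)).unit R₀
  haveI : ∀ P, IsIso (t.app P) := fun P =>
    hW _ (J.W_adj_unit_app (sheafificationAdjunction J (Type u)) P)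
  haveI : IsIso t := NatIso.isIso_of_isIso_app t
  haveI : IsIso α :=
    inferInstanceAs (IsIso (yoneda.leftKanExtensionUnit F₁))
  let iso2 : (yoneda ⋙ L) ⋙ (xstar ⋙ fsub) ≅ (yoneda ⋙ L) ⋙ R :=
    asIso α ≪≫ Functor.isoWhiskerLeft yoneda (asIso t)
  -- the adjunction equivalence
  let eAdj : ∀ (g : Sheaf J (Type u) ⥤ Sheaf K₂ (Type u)),
      ((g ⋙ fstar) ⟶ xstar) ≃ (g ⟶ xstar ⋙ fsub) := fun g =>
    { toFun := fun β => Functor.whiskerLeft g adj.unit ≫ Functor.whiskerRight β fsub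
      invFun := fun γ => Functor.whiskerRight γ fstar ≫ Functor.whiskerLeft xstar adj.counit
      left_inv := fun β => by
        ext X : 2
        simp
      right_inv := fun γ => by
        ext X : 2
        simp }
  have eAdjNat : ∀ (g g' : Sheaf J (Type u) ⥤ Sheaf K₂ (Type u)) (φ : g' ⟶ g)
      (β : (g ⋙ fstar) ⟶ xstar),
      eAdj g' (Functor.whiskerRight φ fstar ≫ β) = φ ≫ eAdj g β := by
    intro g g' φ β
    simp only [eAdj, Equiv.coe_fn_mk]
    ext X : 2
    simp
  -- the restriction equivalence
  let eRes : ∀ (g : Sheaf J (Type u) ⥤ Sheaf K₂ (Type u)), IsPoint.{u} g →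
      ((g ⟶ xstar ⋙ fsub) ≃ (g ⟶ R)) := fun g hg =>
    haveI := hg.2.some
    ((Equiv.ofBijective _ (restriction_bijective J g (xstar ⋙ fsub))).trans
      ⟨fun τ => τ ≫ iso2.hom, fun τ => τ ≫ iso2.inv,
        fun τ => by simp, fun τ => by simp⟩).trans
      (Equiv.ofBijective _ (restriction_bijective J g R)).symm
  have hres : ∀ (g₀ H : Sheaf J (Type u) ⥤ Sheaf K₂ (Type u))
      (hc : PreservesColimitsOfSize.{u, u} g₀)
      (y : (yoneda ⋙ L) ⋙ g₀ ⟶ (yoneda ⋙ L) ⋙ H),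
      Functor.whiskerLeft (yoneda ⋙ L)
        ((Equiv.ofBijective _ (restriction_bijective J g₀ H)).symm y) = y :=
    fun g₀ H hc y => (Equiv.ofBijective _ (restriction_bijective J g₀ H)).apply_symm_apply y
  refine ⟨R, ⟨⟨inferInstance⟩, ⟨inferInstance⟩⟩, fun g hg => (eAdj g).trans (eRes g hg), ?_⟩
  intro g g' hg hg' φ β
  simp only [Equiv.trans_apply]
  rw [eAdjNat g g' φ β]
  generalize (eAdj g) β = γ
  simp only [eRes, Equiv.trans_apply, Equiv.coe_fn_mk]
  refine (restriction_bijective J g' R (inst := hg'.2.some)).1 ?_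
  show Functor.whiskerLeft (yoneda ⋙ L) _ = Functor.whiskerLeft (yoneda ⋙ L) _
  rw [hres g' R hg'.2.some, Functor.whiskerLeft_comp, hres g R hg.2.some]
  show (Functor.whiskerLeft (yoneda ⋙ L) (φ ≫ γ)) ≫ iso2.hom =
    Functor.whiskerLeft (yoneda ⋙ L) φ ≫ (Functor.whiskerLeft (yoneda ⋙ L) γ) ≫ iso2.hom
  rw [Functor.whiskerLeft_comp, Category.assoc]
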